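/- Structure of optimal relay beamformers (Lemma 2): Assume u_i ≠ 0 for all i. Then the supremum, over all feasible tuples (B_1,…,B_R), of inf_{Δf∈A} SNR({B_i},{f̃_i+Δf_i}) equals the supremum, over all tuples (b_1,…,b_R) with b_i ∈ ℂ^{M_i} and ‖b_i‖₂ ≤ √(P_i/(σ_R²+‖u_i‖₂²)), of inf_{Δf∈A} |∑_{i=1}^R (f̃_i+Δf_i)ᵀ b_i ‖u_i‖₂|² / (σ_R² ∑_{i=1}^R |(f̃_i+Δf_i)ᵀ b_i|² + σ_D²). In particular, for every such (b_1,…,b_R) the matrices B_i = b_i (u_i/‖u_i‖₂)ᴴ are feasible and achieve the same worst-case SNR as the reduced expression. -/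

import Mathlib

noncomputable section

/-- Euclidean (ℓ²) norm of a complex vector. -/
def vnorm2 {n : ℕ} (v : Fin n → ℂ) : ℝ := Real.sqrt (∑ j, ‖v j‖ ^ 2)

/-- Received SNR of the two-hop AF relay network for relay BF matrices `B`
and second-hop channels `f`. -/
def SNRval (R : ℕ) (M : Fin R → ℕ) (σR2 σD2 : ℝ)
    (u : (i : Fin R) → Fin (M i) → ℂ)
    (B : (i : Fin R) → Matrix (Fin (M i)) (Fin (M i)) ℂ)
    (f : (i : Fin R) → Fin (M i) → ℂ) : ℝ :=
  ‖∑ i, ∑ j, ∑ k, f i j * B i j k * u i k‖ ^ 2 /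
    (σD2 + σR2 * ∑ i, ∑ k, ‖∑ j, B i j k * f i j‖ ^ 2)

/-- Feasibility: per-relay power constraints `‖B_i u_i‖² + σ_R² tr(B_iᴴ B_i) ≤ P_i`. -/
def FeasibleB (R : ℕ) (M : Fin R → ℕ) (σR2 : ℝ) (P : Fin R → ℝ)
    (u : (i : Fin R) → Fin (M i) → ℂ)
    (B : (i : Fin R) → Matrix (Fin (M i)) (Fin (M i)) ℂ) : Prop :=
  ∀ i, (∑ j, ‖∑ k, B i j k * u i k‖ ^ 2) + σR2 * ∑ j, ∑ k, ‖B i j k‖ ^ 2 ≤ P i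

/-- Worst-case SNR over the uncertainty set `A = {Δf : ‖Δf_i‖₂ ≤ ε_i}`. -/
def WorstSNR (R : ℕ) (M : Fin R → ℕ) (σR2 σD2 : ℝ)
    (u : (i : Fin R) → Fin (M i) → ℂ)
    (ftil : (i : Fin R) → Fin (M i) → ℂ) (ε : Fin R → ℝ)
    (B : (i : Fin R) → Matrix (Fin (M i)) (Fin (M i)) ℂ) : ℝ :=
  sInf {s : ℝ | ∃ Δf : (i : Fin R) → Fin (M i) → ℂ,
    (∀ i, vnorm2 (Δf i) ≤ ε i) ∧
    s = SNRval R M σR2 σD2 u B (fun i => ftil i + Δf i)}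

/-- Worst-case value of the reduced SNR expression of Lemma 2, for relay BF
vectors `b_i`. -/
def RedWorst (R : ℕ) (M : Fin R → ℕ) (σR2 σD2 : ℝ)
    (u : (i : Fin R) → Fin (M i) → ℂ)
    (ftil : (i : Fin R) → Fin (M i) → ℂ) (ε : Fin R → ℝ)
    (b : (i : Fin R) → Fin (M i) → ℂ) : ℝ :=
  sInf {s : ℝ | ∃ Δf : (i : Fin R) → Fin (M i) → ℂ,
    (∀ i, vnorm2 (Δf i) ≤ ε i) ∧
    s = ‖∑ i, (∑ j, (ftil i j + Δf i j) * b i j) * (vnorm2 (u i) : ℂ)‖ ^ 2 /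
          (σR2 * ∑ i, ‖∑ j, (ftil i j + Δf i j) * b i j‖ ^ 2 + σD2)}

lemma vnorm2_nonneg {n : ℕ} (v : Fin n → ℂ) : 0 ≤ vnorm2 v := Real.sqrt_nonneg _

lemma vnorm2_sq {n : ℕ} (v : Fin n → ℂ) : (vnorm2 v) ^ 2 = ∑ j, ‖v j‖ ^ 2 :=
  Real.sq_sqrt (by positivity)

lemma vnorm2_pos {n : ℕ} {v : Fin n → ℂ} (hv : v ≠ 0) : 0 < vnorm2 v := by
  rw [vnorm2, Real.sqrt_pos]
  obtain ⟨j, hj⟩ := Function.ne_iff.1 hv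
  exact Finset.sum_pos' (fun k _ => by positivity)
    ⟨j, Finset.mem_univ j, by have := norm_pos_iff.2 hj; positivity⟩

lemma vnorm2_zero {n : ℕ} : vnorm2 (fun _ : Fin n => (0:ℂ)) = 0 := by simp [vnorm2]

lemma cs {n : ℕ} (v w : Fin n → ℂ) :
    ‖∑ j, v j * w j‖ ^ 2 ≤ (∑ j, ‖v j‖ ^ 2) * (∑ j, ‖w j‖ ^ 2) := by
  have h1 : ‖∑ j, v j * w j‖ ≤ ∑ j, ‖v j‖ * ‖w j‖ :=
    (norm_sum_le _ _).trans (le_of_eq (by simp [norm_mul]))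
  calc ‖∑ j, v j * w j‖ ^ 2 ≤ (∑ j, ‖v j‖ * ‖w j‖) ^ 2 :=
        pow_le_pow_left₀ (norm_nonneg _) h1 2
    _ ≤ _ := Finset.sum_mul_sq_le_sq_mul_sq _ _ _

lemma sum_conj_mul {n : ℕ} (v : Fin n → ℂ) :
    ∑ k, (starRingEnd ℂ) (v k) * v k = (((vnorm2 v) ^ 2 : ℝ) : ℂ) := by
  rw [vnorm2_sq]
  push_cast
  refine Finset.sum_congr rfl fun k _ => ?_
  exact_mod_cast RCLike.conj_mul (v k)

lemma rankone_inner {n : ℕ} {u : Fin n → ℂ} (hu : u ≠ 0) (b : ℂ) :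
    ∑ k, (b * ((starRingEnd ℂ) (u k) / ((vnorm2 u : ℝ) : ℂ))) * u k
      = b * ((vnorm2 u : ℝ) : ℂ) := by
  have hs : ((vnorm2 u : ℝ) : ℂ) ≠ 0 := by
    exact_mod_cast (vnorm2_pos hu).ne'
  have h := sum_conj_mul u
  have h2 : (((vnorm2 u) ^ 2 : ℝ) : ℂ) = ((vnorm2 u : ℝ) : ℂ) ^ 2 := by push_cast; ring
  calc ∑ k, (b * ((starRingEnd ℂ) (u k) / ((vnorm2 u : ℝ) : ℂ))) * u k
      = (b / ((vnorm2 u : ℝ) : ℂ)) * ∑ k, (starRingEnd ℂ) (u k) * u k := by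
        rw [Finset.mul_sum]; exact Finset.sum_congr rfl fun k _ => by ring
    _ = b * ((vnorm2 u : ℝ) : ℂ) := by rw [h, h2]; field_simp

lemma norm_coe_vnorm2 {n : ℕ} (u : Fin n → ℂ) : ‖((vnorm2 u : ℝ) : ℂ)‖ = vnorm2 u := by
  rw [Complex.norm_real, Real.norm_of_nonneg (vnorm2_nonneg u)]

lemma rankone_den {n : ℕ} {u : Fin n → ℂ} (hu : u ≠ 0) (b f : Fin n → ℂ) :
    ∑ k, ‖∑ j, (b j * ((starRingEnd ℂ) (u k) / ((vnorm2 u : ℝ) : ℂ))) * f j‖ ^ 2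
      = ‖∑ j, f j * b j‖ ^ 2 := by
  have hs : 0 < vnorm2 u := vnorm2_pos hu
  have hF : ∀ k, ∑ j, (b j * ((starRingEnd ℂ) (u k) / ((vnorm2 u : ℝ) : ℂ))) * f j
      = ((starRingEnd ℂ) (u k) / ((vnorm2 u : ℝ) : ℂ)) * ∑ j, f j * b j := by
    intro k
    rw [Finset.mul_sum]; exact Finset.sum_congr rfl fun j _ => by ring
  simp only [hF, norm_mul, mul_pow]
  rw [← Finset.sum_mul]
  have : ∑ k, ‖(starRingEnd ℂ) (u k) / ((vnorm2 u : ℝ) : ℂ)‖ ^ 2 = 1 := by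
    have : ∀ k, ‖(starRingEnd ℂ) (u k) / ((vnorm2 u : ℝ) : ℂ)‖ ^ 2
        = ‖u k‖ ^ 2 / (vnorm2 u) ^ 2 := by
      intro k
      rw [norm_div, norm_coe_vnorm2, RCLike.norm_conj, div_pow]
    simp only [this]
    rw [← Finset.sum_div, ← vnorm2_sq, div_self (by positivity)]
  rw [this, one_mul]

lemma rankone_SNR (R : ℕ) (M : Fin R → ℕ) (σR2 σD2 : ℝ)
    (u : (i : Fin R) → Fin (M i) → ℂ) (hu : ∀ i, u i ≠ 0)
    (b : (i : Fin R) → Fin (M i) → ℂ) (f : (i : Fin R) → Fin (M i) → ℂ) :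
    SNRval R M σR2 σD2 u (fun i => fun j k =>
        b i j * ((starRingEnd ℂ) (u i k) / (vnorm2 (u i) : ℂ))) f
      = ‖∑ i, (∑ j, f i j * b i j) * (vnorm2 (u i) : ℂ)‖ ^ 2 /
          (σR2 * ∑ i, ‖∑ j, f i j * b i j‖ ^ 2 + σD2) := by
  unfold SNRval
  congr 1
  · congr 2
    refine Finset.sum_congr rfl fun i _ => ?_
    have hj : ∀ j, ∑ k, f i j * (b i j * ((starRingEnd ℂ) (u i k) / (vnorm2 (u i) : ℂ))) * u i k
        = (f i j * b i j) * (vnorm2 (u i) : ℂ) := by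
      intro j
      rw [← rankone_inner (hu i) (f i j * b i j)]
      exact Finset.sum_congr rfl fun k _ => by ring
    simp only [hj]
    rw [← Finset.sum_mul]
  · rw [add_comm]
    congr 2
    refine Finset.sum_congr rfl fun i _ => ?_
    exact rankone_den (hu i) (b i) (f i)

lemma sq_le_of_hb {R : ℕ} {M : Fin R → ℕ} {σR2 : ℝ} (hσR : 0 < σR2)
    {P : Fin R → ℝ} (hP : ∀ i, 0 < P i)
    {u : (i : Fin R) → Fin (M i) → ℂ}
    {b : (i : Fin R) → Fin (M i) → ℂ}
    (hb : ∀ i, vnorm2 (b i) ≤ Real.sqrt (P i / (σR2 + (vnorm2 (u i)) ^ 2)))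
    (i : Fin R) : ∑ j, ‖b i j‖ ^ 2 ≤ P i / (σR2 + (vnorm2 (u i)) ^ 2) := by
  have h := pow_le_pow_left₀ (vnorm2_nonneg (b i)) (hb i) 2
  rw [vnorm2_sq, Real.sq_sqrt (le_of_lt (div_pos (hP i) (add_pos_of_pos_of_nonneg hσR (sq_nonneg _))))] at h
  exact h

lemma key2 (R : ℕ) (M : Fin R → ℕ)
    (u ftil : (i : Fin R) → Fin (M i) → ℂ) (ε : Fin R → ℝ)
    (σR2 σD2 : ℝ) (hσR : 0 < σR2)
    (P : Fin R → ℝ) (hP : ∀ i, 0 < P i) (hu : ∀ i, u i ≠ 0)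
    (b : (i : Fin R) → Fin (M i) → ℂ)
    (hb : ∀ i, vnorm2 (b i) ≤ Real.sqrt (P i / (σR2 + (vnorm2 (u i)) ^ 2))) :
    FeasibleB R M σR2 P u (fun i => fun j k =>
        b i j * ((starRingEnd ℂ) (u i k) / (vnorm2 (u i) : ℂ))) ∧
    WorstSNR R M σR2 σD2 u ftil ε (fun i => fun j k =>
        b i j * ((starRingEnd ℂ) (u i k) / (vnorm2 (u i) : ℂ))) =
      RedWorst R M σR2 σD2 u ftil ε b := by
  constructor
  · intro i
    have hs : 0 < vnorm2 (u i) := vnorm2_pos (hu i)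
    have h1 : ∀ j, ∑ k, (b i j * ((starRingEnd ℂ) (u i k) / (vnorm2 (u i) : ℂ))) * u i k
        = b i j * (vnorm2 (u i) : ℂ) := fun j => rankone_inner (hu i) (b i j)
    have h2 : ∑ j, ‖∑ k, (b i j * ((starRingEnd ℂ) (u i k) / (vnorm2 (u i) : ℂ))) * u i k‖ ^ 2
        = (vnorm2 (u i)) ^ 2 * ∑ j, ‖b i j‖ ^ 2 := by
      simp only [h1, norm_mul, mul_pow, norm_coe_vnorm2]
      rw [Finset.mul_sum]
      exact Finset.sum_congr rfl fun j _ => by ring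
    have h3 : ∑ j, ∑ k, ‖b i j * ((starRingEnd ℂ) (u i k) / (vnorm2 (u i) : ℂ))‖ ^ 2
        = ∑ j, ‖b i j‖ ^ 2 := by
      refine Finset.sum_congr rfl fun j _ => ?_
      have : ∀ k, ‖b i j * ((starRingEnd ℂ) (u i k) / (vnorm2 (u i) : ℂ))‖ ^ 2
          = ‖b i j‖ ^ 2 * (‖u i k‖ ^ 2 / (vnorm2 (u i)) ^ 2) := by
        intro k
        rw [norm_mul, norm_div, norm_coe_vnorm2, RCLike.norm_conj, mul_pow, div_pow]
      simp only [this]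
      rw [← Finset.mul_sum, ← Finset.sum_div, ← vnorm2_sq, div_self (by positivity), mul_one]
    rw [h2, h3]
    have h4 := sq_le_of_hb hσR hP hb i
    have h5 : 0 < σR2 + (vnorm2 (u i)) ^ 2 := add_pos_of_pos_of_nonneg hσR (sq_nonneg _)
    have h6 : ((vnorm2 (u i)) ^ 2 + σR2) * (P i / (σR2 + (vnorm2 (u i)) ^ 2)) = P i := by
      rw [add_comm ((vnorm2 (u i)) ^ 2) σR2, mul_div_cancel₀ _ h5.ne']
    calc (vnorm2 (u i)) ^ 2 * ∑ j, ‖b i j‖ ^ 2 + σR2 * ∑ j, ‖b i j‖ ^ 2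
        = ((vnorm2 (u i)) ^ 2 + σR2) * ∑ j, ‖b i j‖ ^ 2 := by ring
      _ ≤ ((vnorm2 (u i)) ^ 2 + σR2) * (P i / (σR2 + (vnorm2 (u i)) ^ 2)) := by
          apply mul_le_mul_of_nonneg_left h4 (by positivity)
      _ = P i := h6
  · unfold WorstSNR RedWorst
    refine congrArg sInf (Set.ext fun s => ?_)
    simp only [rankone_SNR R M σR2 σD2 u hu b, Pi.add_apply]

lemma key1 (R : ℕ) (M : Fin R → ℕ)
    (u ftil : (i : Fin R) → Fin (M i) → ℂ) (ε : Fin R → ℝ) (hε : ∀ i, 0 ≤ ε i)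
    (σR2 σD2 : ℝ) (hσR : 0 < σR2) (hσD : 0 < σD2)
    (P : Fin R → ℝ) (hP : ∀ i, 0 < P i) (hu : ∀ i, u i ≠ 0)
    (B : (i : Fin R) → Matrix (Fin (M i)) (Fin (M i)) ℂ)
    (hB : FeasibleB R M σR2 P u B) :
    ∃ b : (i : Fin R) → Fin (M i) → ℂ,
      (∀ i, vnorm2 (b i) ≤ Real.sqrt (P i / (σR2 + (vnorm2 (u i)) ^ 2))) ∧
      WorstSNR R M σR2 σD2 u ftil ε B ≤ RedWorst R M σR2 σD2 u ftil ε b := by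
  have hs : ∀ i, 0 < vnorm2 (u i) := fun i => vnorm2_pos (hu i)
  have hc : ∀ i, ((vnorm2 (u i) : ℝ) : ℂ) ≠ 0 := fun i => by exact_mod_cast (hs i).ne'
  refine ⟨fun i j => (∑ k, B i j k * u i k) / (vnorm2 (u i) : ℂ), ?_, ?_⟩
  · -- admissibility
    intro i
    have hs2 : 0 < (vnorm2 (u i)) ^ 2 := pow_pos (hs i) 2
    have hden : 0 < σR2 + (vnorm2 (u i)) ^ 2 := add_pos_of_pos_of_nonneg hσR (sq_nonneg _)
    rw [vnorm2]
    apply Real.sqrt_le_sqrt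
    have hsum : ∑ j, ‖(∑ k, B i j k * u i k) / ((vnorm2 (u i) : ℝ) : ℂ)‖ ^ 2
        = (∑ j, ‖∑ k, B i j k * u i k‖ ^ 2) / (vnorm2 (u i)) ^ 2 := by
      rw [Finset.sum_div]
      exact Finset.sum_congr rfl fun j _ => by
        rw [norm_div, norm_coe_vnorm2, div_pow]
    rw [hsum, div_le_div_iff₀ hs2 hden]
    have hQ : ∑ j, ‖∑ k, B i j k * u i k‖ ^ 2
        ≤ (∑ j, ∑ k, ‖B i j k‖ ^ 2) * (vnorm2 (u i)) ^ 2 := by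
      rw [Finset.sum_mul]
      refine Finset.sum_le_sum fun j _ => ?_
      rw [vnorm2_sq (u i)]
      exact cs (fun k => B i j k) (u i)
    have hfe := hB i
    nlinarith [mul_le_mul_of_nonneg_right hfe hs2.le, mul_le_mul_of_nonneg_left hQ hσR.le]
  · -- worst-case comparison
    have pointwise : ∀ f : (i : Fin R) → Fin (M i) → ℂ,
        SNRval R M σR2 σD2 u B f ≤
          ‖∑ i, (∑ j, f i j * ((∑ k, B i j k * u i k) / (vnorm2 (u i) : ℂ)))
              * (vnorm2 (u i) : ℂ)‖ ^ 2 /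
            (σR2 * ∑ i, ‖∑ j, f i j * ((∑ k, B i j k * u i k) / (vnorm2 (u i) : ℂ))‖ ^ 2
              + σD2) := by
      intro f
      have hnum : ∀ i, (∑ j, f i j * ((∑ k, B i j k * u i k) / (vnorm2 (u i) : ℂ)))
          * ((vnorm2 (u i) : ℝ) : ℂ) = ∑ j, ∑ k, f i j * B i j k * u i k := by
        intro i
        rw [Finset.sum_mul]
        refine Finset.sum_congr rfl fun j _ => ?_
        have h1 : f i j * ((∑ k, B i j k * u i k) / ((vnorm2 (u i) : ℝ) : ℂ))
            * ((vnorm2 (u i) : ℝ) : ℂ) = f i j * ∑ k, B i j k * u i k := by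
          rw [mul_assoc, div_mul_cancel₀ _ (hc i)]
        rw [h1, Finset.mul_sum]
        exact Finset.sum_congr rfl fun k _ => by ring
      have hden : ∀ i, ‖∑ j, f i j * ((∑ k, B i j k * u i k) / (vnorm2 (u i) : ℂ))‖ ^ 2
          ≤ ∑ k, ‖∑ j, B i j k * f i j‖ ^ 2 := by
        intro i
        have h1 : ∑ j, f i j * ((∑ k, B i j k * u i k) / ((vnorm2 (u i) : ℝ) : ℂ))
            = (∑ k, (∑ j, B i j k * f i j) * u i k) / ((vnorm2 (u i) : ℝ) : ℂ) := by
          have e2 : ∑ k, (∑ j, B i j k * f i j) * u i k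
              = ∑ j, ∑ k, B i j k * f i j * u i k := by
            rw [Finset.sum_comm]
            exact Finset.sum_congr rfl fun k _ => Finset.sum_mul _ _ _
          rw [e2, Finset.sum_div]
          refine Finset.sum_congr rfl fun j _ => ?_
          rw [mul_div_assoc']
          congr 1
          rw [Finset.mul_sum]
          exact Finset.sum_congr rfl fun k _ => by ring
        rw [h1, norm_div, norm_coe_vnorm2, div_pow]
        have hs2 : 0 < (vnorm2 (u i)) ^ 2 := pow_pos (hs i) 2
        rw [div_le_iff₀ hs2, vnorm2_sq (u i)]
        exact cs (fun k => ∑ j, B i j k * f i j) (u i)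
      unfold SNRval
      have hnumeq : ‖∑ i, ∑ j, ∑ k, f i j * B i j k * u i k‖ ^ 2
          = ‖∑ i, (∑ j, f i j * ((∑ k, B i j k * u i k) / (vnorm2 (u i) : ℂ)))
              * (vnorm2 (u i) : ℂ)‖ ^ 2 := by
        congr 2
        exact Finset.sum_congr rfl fun i _ => (hnum i).symm
      rw [hnumeq]
      apply div_le_div_of_nonneg_left (pow_nonneg (norm_nonneg _) 2)
      · exact add_pos_of_nonneg_of_pos (mul_nonneg hσR.le
          (Finset.sum_nonneg fun i _ => pow_nonneg (norm_nonneg _) 2)) hσD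
      · rw [add_comm σD2]
        refine add_le_add ?_ le_rfl
        apply mul_le_mul_of_nonneg_left _ hσR.le
        exact Finset.sum_le_sum fun i _ => hden i
    unfold WorstSNR RedWorst
    have hbdd : BddBelow {s : ℝ | ∃ Δf : (i : Fin R) → Fin (M i) → ℂ,
        (∀ i, vnorm2 (Δf i) ≤ ε i) ∧
        s = SNRval R M σR2 σD2 u B (fun i => ftil i + Δf i)} := by
      refine ⟨0, ?_⟩
      rintro x ⟨g, -, rfl⟩
      unfold SNRval
      exact div_nonneg (pow_nonneg (norm_nonneg _) 2)
        (add_nonneg hσD.le (mul_nonneg hσR.le (Finset.sum_nonneg fun i _ =>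
          Finset.sum_nonneg fun k _ => pow_nonneg (norm_nonneg _) 2)))
    apply le_csInf
    · exact ⟨_, ⟨fun i _ => 0, fun i => by simpa [vnorm2_zero] using hε i, rfl⟩⟩
    · rintro y ⟨Δf, hΔ, rfl⟩
      exact (csInf_le hbdd ⟨Δf, hΔ, rfl⟩).trans (pointwise (fun i => ftil i + Δf i))

theorem stmt3 (R : ℕ) (hR : 1 ≤ R) (M : Fin R → ℕ)
    (u ftil : (i : Fin R) → Fin (M i) → ℂ) (ε : Fin R → ℝ) (hε : ∀ i, 0 ≤ ε i)
    (σR2 σD2 : ℝ) (hσR : 0 < σR2) (hσD : 0 < σD2)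
    (P : Fin R → ℝ) (hP : ∀ i, 0 < P i)
    (hu : ∀ i, u i ≠ 0) :
    (sSup {s : ℝ | ∃ B, FeasibleB R M σR2 P u B ∧
          s = WorstSNR R M σR2 σD2 u ftil ε B} =
      sSup {s : ℝ | ∃ b : (i : Fin R) → Fin (M i) → ℂ,
        (∀ i, vnorm2 (b i) ≤ Real.sqrt (P i / (σR2 + (vnorm2 (u i)) ^ 2))) ∧
        s = RedWorst R M σR2 σD2 u ftil ε b}) ∧
    (∀ b : (i : Fin R) → Fin (M i) → ℂ,
      (∀ i, vnorm2 (b i) ≤ Real.sqrt (P i / (σR2 + (vnorm2 (u i)) ^ 2))) →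
      FeasibleB R M σR2 P u (fun i => fun j k =>
          b i j * ((starRingEnd ℂ) (u i k) / (vnorm2 (u i) : ℂ))) ∧
      WorstSNR R M σR2 σD2 u ftil ε (fun i => fun j k =>
          b i j * ((starRingEnd ℂ) (u i k) / (vnorm2 (u i) : ℂ))) =
        RedWorst R M σR2 σD2 u ftil ε b) := by
  have part2 := fun b hb => key2 R M u ftil ε σR2 σD2 hσR P hP hu b hb
  refine ⟨?_, part2⟩
  apply csSup_eq_csSup_of_forall_exists_le
  · rintro x ⟨B, hB, rfl⟩
    obtain ⟨b, hb, hle⟩ := key1 R M u ftil ε hε σR2 σD2 hσR hσD P hP hu B hB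
    exact ⟨RedWorst R M σR2 σD2 u ftil ε b, ⟨b, hb, rfl⟩, hle⟩
  · rintro y ⟨b, hb, rfl⟩
    obtain ⟨hfeas, heq⟩ := part2 b hb
    exact ⟨WorstSNR R M σR2 σD2 u ftil ε (fun i => fun j k =>
        b i j * ((starRingEnd ℂ) (u i k) / (vnorm2 (u i) : ℂ))),
      ⟨_, hfeas, rfl⟩, heq.ge⟩
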